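/- For every positive integer k and every integer m ≥ k, Duplicator wins the k-round Ehrenfeucht game on the trees T_1^{(1,k,m)} and T_2^{(1,k,m)} in which Spoiler makes all k of his moves on T_1^{(1,k,m)} and Duplicator responds on T_2^{(1,k,m)}; that is, Duplicator can ensure the winning conditions (Main 1) and (Main 2) hold for all selected pairs together with the pair of roots. -/

import Mathlib

/-! ## Rooted trees -/

/-- A rooted tree structure: a vertex type, a root, and a parent map
(`parent v = none` is intended to hold exactly when `v` is the root). -/
structure RTree where
  V : Type
  root : V
  parent : V → Option V

namespace RTree

/-- Iterate the parent map `n` times. -/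
def parentIter (T : RTree) : ℕ → T.V → Option T.V
  | 0, v => some v
  | n + 1, v => (T.parent v).bind (T.parentIter n)

/-- `u` is a descendant of `v` (possibly `u = v`). -/
def IsDesc (T : RTree) (v u : T.V) : Prop :=
  ∃ n, T.parentIter n u = some v

/-- The structure is a genuine rooted, locally finite tree:
exactly the root has no parent, every vertex reaches the root by iterating
the parent map (connectivity and acyclicity), and every vertex has finitely
many children (local finiteness). -/
def IsTree (T : RTree) : Prop :=
  (∀ v, T.parent v = none ↔ v = T.root) ∧
  (∀ v, ∃ n, T.parentIter n v = some T.root) ∧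
  (∀ v, {u | T.parent u = some v}.Finite)

open Classical in
/-- The subtree `T(v)` consisting of `v` and all its descendants, rooted at `v`. -/
noncomputable def subtree (T : RTree) (v : T.V) : RTree where
  V := {u : T.V // T.IsDesc v u}
  root := ⟨v, 0, rfl⟩
  parent u :=
    if u.1 = v then none
    else (T.parent u.1).bind fun w =>
      if h : T.IsDesc v w then some ⟨w, h⟩ else none

end RTree

/-- An isomorphism of rooted trees: a bijection of vertices mapping root to
root and commuting with the parent maps. -/
structure TreeIso (S T : RTree) where
  toEquiv : S.V ≃ T.V
  map_root : toEquiv S.root = T.root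
  map_parent : ∀ v, (S.parent v).map toEquiv = T.parent (toEquiv v)

/-! ## First-order logic of rooted trees -/

/-- Terms: variables (de Bruijn indices) and the constant `R` for the root. -/
inductive FOTerm where
  | var : ℕ → FOTerm
  | root : FOTerm
deriving DecidableEq

/-- First-order formulas in the language of rooted trees: equality `x = y`,
the parent relation `parentOf t t'` (meaning `π(t') = t`, i.e. `t` is the
parent of `t'`), Boolean connectives, and quantifiers (de Bruijn style). -/
inductive FOFormula where
  | eq : FOTerm → FOTerm → FOFormula
  | parentOf : FOTerm → FOTerm → FOFormula
  | not : FOFormula → FOFormula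
  | and : FOFormula → FOFormula → FOFormula
  | or : FOFormula → FOFormula → FOFormula
  | imp : FOFormula → FOFormula → FOFormula
  | all : FOFormula → FOFormula
  | ex : FOFormula → FOFormula
deriving DecidableEq

namespace FOTerm

def eval (T : RTree) (env : ℕ → T.V) : FOTerm → T.V
  | var n => env n
  | root => T.root

def freeBound : FOTerm → ℕ
  | var n => n + 1
  | root => 0

end FOTerm

/-- Kinds of quantifiers, used to count alternations. -/
inductive QKind where
  | ex | all
deriving DecidableEq

/-- The dual of a quantifier kind. -/
def QKind.dual : QKind → QKind
  | .ex => .all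
  | .all => .ex

namespace FOFormula

/-- Satisfaction of a formula in a rooted tree under an environment. -/
def Sat (T : RTree) : FOFormula → (ℕ → T.V) → Prop
  | eq t₁ t₂, env => t₁.eval T env = t₂.eval T env
  | parentOf t₁ t₂, env => T.parent (t₂.eval T env) = some (t₁.eval T env)
  | not φ, env => ¬ φ.Sat T env
  | and φ ψ, env => φ.Sat T env ∧ ψ.Sat T env
  | or φ ψ, env => φ.Sat T env ∨ ψ.Sat T env
  | imp φ ψ, env => φ.Sat T env → ψ.Sat T env
  | all φ, env => ∀ w : T.V, φ.Sat T (fun n => match n with | 0 => w | Nat.succ k => env k)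
  | ex φ, env => ∃ w : T.V, φ.Sat T (fun n => match n with | 0 => w | Nat.succ k => env k)

/-- Quantifier depth: the maximum number of nested quantifiers. -/
def qd : FOFormula → ℕ
  | eq _ _ => 0
  | parentOf _ _ => 0
  | not φ => φ.qd
  | and φ ψ => max φ.qd ψ.qd
  | or φ ψ => max φ.qd ψ.qd
  | imp φ ψ => max φ.qd ψ.qd
  | all φ => φ.qd + 1
  | ex φ => φ.qd + 1

/-- Auxiliary alternation count: `aqdAux φ pol q` is the maximum number of
alternations between (effectively) existential and universal quantifiers along
a nested quantifier sequence of `φ`, given the current polarity `pol`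
(`true` = positive; negations and antecedents of implications flip it, so that
e.g. a `∀` under a negation counts as an `∃`) and the effective kind `q` of
the innermost enclosing quantifier (if any). -/
def aqdAux : FOFormula → Bool → Option QKind → ℕ
  | eq _ _, _, _ => 0
  | parentOf _ _, _, _ => 0
  | not φ, pol, q => φ.aqdAux (!pol) q
  | and φ ψ, pol, q => max (φ.aqdAux pol q) (ψ.aqdAux pol q)
  | or φ ψ, pol, q => max (φ.aqdAux pol q) (ψ.aqdAux pol q)
  | imp φ ψ, pol, q => max (φ.aqdAux (!pol) q) (ψ.aqdAux pol q)
  | all φ, pol, q =>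
      (if q = some (if pol then QKind.ex else QKind.all) then 1 else 0) +
        φ.aqdAux pol (some (if pol then QKind.all else QKind.ex))
  | ex φ, pol, q =>
      (if q = some (if pol then QKind.all else QKind.ex) then 1 else 0) +
        φ.aqdAux pol (some (if pol then QKind.ex else QKind.all))

/-- The number of alternations of quantifiers of a formula: the maximum number
of switches between (effectively) existential and universal quantifiers in a
nested quantifier sequence.  Purely existential or purely universal formulas
have `aqd = 0`. -/
def aqd (φ : FOFormula) : ℕ := φ.aqdAux true none

/-- A bound on the free variables of a formula: all free de Bruijn indices
are `< freeBound`. -/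
def freeBound : FOFormula → ℕ
  | eq t₁ t₂ => max t₁.freeBound t₂.freeBound
  | parentOf t₁ t₂ => max t₁.freeBound t₂.freeBound
  | not φ => φ.freeBound
  | and φ ψ => max φ.freeBound ψ.freeBound
  | or φ ψ => max φ.freeBound ψ.freeBound
  | imp φ ψ => max φ.freeBound ψ.freeBound
  | all φ => φ.freeBound - 1
  | ex φ => φ.freeBound - 1

/-- A sentence is a formula with no free variables. -/
def IsSentence (φ : FOFormula) : Prop := φ.freeBound = 0

end FOFormula

/-- A (closed) formula holds in a rooted tree. -/
def Models (T : RTree) (φ : FOFormula) : Prop :=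
  φ.Sat T (fun _ => T.root)

/-- The formula `P_i(x)`, with free variable `x` being de Bruijn index `0`:
`P_0(x) = ∀ y ¬(π(y) = x)` and `P_{i+1}(x) = ∀ y (π(y) = x → ¬ P_i(y))`. -/
def Pform : ℕ → FOFormula
  | 0 => .all (.not (.parentOf (.var 1) (.var 0)))
  | i + 1 => .all (.imp (.parentOf (.var 1) (.var 0)) (.not (Pform i)))

/-- The sentence `KEIN_i = P_i(R)`. -/
def KEIN : ℕ → FOFormula
  | 0 => .all (.not (.parentOf .root (.var 0)))
  | i + 1 => .all (.imp (.parentOf .root (.var 0)) (.not (Pform i)))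

/-! ## Ehrenfeucht games -/

/-- The winning condition for Duplicator: for all pairs `(x_i, y_i)`, `(x_j, y_j)`
in the list of selected/designated pairs, (Main 1) `π(x_j) = x_i ↔ π(y_j) = y_i`,
and (Main 2) `x_i = x_j ↔ y_i = y_j`. -/
def GoodPairs (T₁ T₂ : RTree) (ps : List (T₁.V × T₂.V)) : Prop :=
  ∀ p ∈ ps, ∀ q ∈ ps,
    (T₁.parent p.1 = some q.1 ↔ T₂.parent p.2 = some q.2) ∧
    (p.1 = q.1 ↔ p.2 = q.2)

/-- Duplicator wins the scheduled Ehrenfeucht game on `T₁, T₂` in which Spoiler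
must play his moves in consecutive batches, the batch sizes given by the list
`sched`, switching trees after each batch; `side = true` means Spoiler currently
plays on `T₁` (Duplicator answering on `T₂`), `side = false` means Spoiler
currently plays on `T₂`.  The list `ps` records the pairs selected so far
(including designated pairs and the pair of roots); Duplicator wins when the
final configuration satisfies `GoodPairs`. -/
def DupWinsSched (T₁ T₂ : RTree) : List ℕ → Bool → List (T₁.V × T₂.V) → Prop
  | [], _, ps => GoodPairs T₁ T₂ ps
  | 0 :: rest, side, ps => DupWinsSched T₁ T₂ rest (!side) ps
  | (n + 1) :: rest, side, ps =>
      if side then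
        ∀ x : T₁.V, ∃ y : T₂.V, DupWinsSched T₁ T₂ (n :: rest) side ((x, y) :: ps)
      else
        ∀ y : T₂.V, ∃ x : T₁.V, DupWinsSched T₁ T₂ (n :: rest) side ((x, y) :: ps)
termination_by sched _ _ => (sched.length, sched.sum)
decreasing_by
  all_goals
    first
      | exact Prod.Lex.left _ _ (Nat.lt_succ_self _)
      | exact Prod.Lex.right _ (by simp [List.sum_cons])

/-- The cost (in switches) for Spoiler of playing on side `side` when his
previous move (if any) was on side `last`. -/
def switchCost (last : Option Bool) (side : Bool) : ℕ :=
  match last with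
  | none => 0
  | some b => if b = side then 0 else 1

/-- Duplicator wins the Ehrenfeucht game `EHR` with `rounds` remaining rounds,
`sw` remaining switches allowed to Spoiler, `last` the side on which Spoiler
made his previous move (if any), and `ps` the pairs selected so far.  In each
round Spoiler picks a side (paying a switch if he changes trees, which he may
do only if he has switches left) and a vertex in that tree, and Duplicator
answers in the other tree. -/
def DupWinsEHRAux (T₁ T₂ : RTree) :
    ℕ → ℕ → Option Bool → List (T₁.V × T₂.V) → Prop
  | 0, _, _, ps => GoodPairs T₁ T₂ ps
  | r + 1, sw, last, ps =>
      ∀ side : Bool, switchCost last side ≤ sw →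
        if side then
          ∀ x : T₁.V, ∃ y : T₂.V,
            DupWinsEHRAux T₁ T₂ r (sw - switchCost last side) (some side) ((x, y) :: ps)
        else
          ∀ y : T₂.V, ∃ x : T₁.V,
            DupWinsEHRAux T₁ T₂ r (sw - switchCost last side) (some side) ((x, y) :: ps)

/-- Duplicator wins the game `EHR[T₁, T₂, s, r]`: `r` rounds, Spoiler may start
on either tree and make at most `s` switches. -/
def DupWinsEHR (T₁ T₂ : RTree) (s r : ℕ) : Prop :=
  DupWinsEHRAux T₁ T₂ r s none [(T₁.root, T₂.root)]

/-! ## The trees `T₁^{(s,k,m)}` and `T₂^{(s,k,m)}` -/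

/-- The one-vertex rooted tree. -/
def single : RTree where
  V := PUnit
  root := PUnit.unit
  parent := fun _ => none

/-- Hang the trees `f 0, …, f (n-1)` from a new root: the root of each `f i`
becomes a child of the new root. -/
def hang (n : ℕ) (f : Fin n → RTree) : RTree where
  V := Unit ⊕ (Σ i : Fin n, (f i).V)
  root := Sum.inl ()
  parent := fun x =>
    match x with
    | Sum.inl _ => none
    | Sum.inr ⟨i, w⟩ =>
      match (f i).parent w with
      | none => some (Sum.inl ())
      | some w' => some (Sum.inr ⟨i, w'⟩)

/-- The pair of trees `(T₁^{(s,k,m)}, T₂^{(s,k,m)})`, indexed by `s` (the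
parameter `k` plays no role in the construction).  Conventions for `s = 0`:
`T₁^{(0)}` is a single vertex and `T₂^{(0)}` is a star of `m` childless
children.  For `s ≥ 1`: in `T₁^{(s+1)}` the root has `m+1` children, from each
of which hangs a copy of `T₂^{(s)}`; in `T₂^{(s+1)}` the root has `m+1`
children, from `m` of which hangs a copy of `T₂^{(s)}` and from the remaining
one hangs a copy of `T₁^{(s)}`. -/
def TreePair (m : ℕ) : ℕ → RTree × RTree
  | 0 => (single, hang m fun _ => single)
  | s + 1 =>
      (hang (m + 1) fun _ => (TreePair m s).2,
       hang (m + 1) fun i => if i.1 = m then (TreePair m s).1 else (TreePair m s).2)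

/-- The tree `T₁^{(s,k,m)}`. -/
def Tree1 (s k m : ℕ) : RTree := (TreePair m s).1

/-- The tree `T₂^{(s,k,m)}`. -/
def Tree2 (s k m : ℕ) : RTree := (TreePair m s).2

def Bm (m : ℕ) : RTree := hang m fun _ => single
def f2m (m : ℕ) : Fin (m+1) → RTree := fun i => if i.1 = m then single else Bm m
def T1m (m : ℕ) : RTree := hang (m+1) fun _ => Bm m
def T2m (m : ℕ) : RTree := hang (m+1) (f2m m)

def castW {m : ℕ} {i : Fin (m+1)} (h : i.1 ≠ m) (w : (Bm m).V) : (f2m m i).V :=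
  cast (congrArg RTree.V ((if_neg h : (if i.1 = m then single else Bm m) = Bm m))).symm w

lemma hang_parent_inr (n : ℕ) (g : Fin n → RTree) (i : Fin n) (w : (g i).V) :
    (hang n g).parent (Sum.inr ⟨i, w⟩) =
      some (((g i).parent w).elim (Sum.inl ()) (fun w' => Sum.inr ⟨i, w'⟩)) := by
  cases hp : (g i).parent w <;> simp [hang, hp]

lemma parent_cast' (n : ℕ) (g : Fin n → RTree) (i : Fin n) (T : RTree) (e : g i = T) (w : T.V) :
    (hang n g).parent (Sum.inr ⟨i, cast (congrArg RTree.V e).symm w⟩) =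
      some ((T.parent w).elim (Sum.inl ())
        (fun w' => Sum.inr ⟨i, cast (congrArg RTree.V e).symm w'⟩)) := by
  cases e
  simp only [cast_eq]
  exact hang_parent_inr n g i w

lemma parent_castW {m : ℕ} {i : Fin (m+1)} (h : i.1 ≠ m) (w : (Bm m).V) :
    (T2m m).parent (Sum.inr ⟨i, castW h w⟩) =
      some (((Bm m).parent w).elim (Sum.inl ()) (fun w' => Sum.inr ⟨i, castW h w'⟩)) := by
  unfold T2m castW
  exact parent_cast' (m+1) (f2m m) i (Bm m) (if_neg h) w

lemma T1_parent_inr {m : ℕ} (i : Fin (m+1)) (w : (Bm m).V) :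
    (T1m m).parent (Sum.inr ⟨i, w⟩) =
      some (((Bm m).parent w).elim (Sum.inl ()) (fun w' => Sum.inr ⟨i, w'⟩)) :=
  hang_parent_inr (m+1) (fun _ => Bm m) i w

lemma T1_parent_root {m : ℕ} : (T1m m).parent (Sum.inl ()) = none := rfl
lemma T2_parent_root {m : ℕ} : (T2m m).parent (Sum.inl ()) = none := rfl

lemma inr_castW_eq {m : ℕ} {i₁ i₂ : Fin (m+1)} (h₁ : i₁.1 ≠ m) (h₂ : i₂.1 ≠ m)
    (w₁ w₂ : (Bm m).V) :
    (Sum.inr ⟨i₁, castW h₁ w₁⟩ : (T2m m).V) = Sum.inr ⟨i₂, castW h₂ w₂⟩ ↔ i₁ = i₂ ∧ w₁ = w₂ := by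
  constructor
  · intro hh
    injection hh with h2
    injection h2 with hi hw
    exact ⟨hi, eq_of_heq (((cast_heq _ w₁).symm.trans hw).trans (cast_heq _ w₂))⟩
  · rintro ⟨rfl, rfl⟩
    rfl

lemma inr_eq_T1 {m : ℕ} {i₁ i₂ : Fin (m+1)} (w₁ w₂ : (Bm m).V) :
    (Sum.inr ⟨i₁, w₁⟩ : (T1m m).V) = Sum.inr ⟨i₂, w₂⟩ ↔ i₁ = i₂ ∧ w₁ = w₂ := by
  simp

lemma Bparent_eq_none {m : ℕ} (w : (Bm m).V) : (Bm m).parent w = none ↔ w = Sum.inl () := by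
  rcases w with ⟨⟩ | ⟨j, u⟩
  · simp
    exact ⟨fun _ => rfl, fun _ => rfl⟩
  · show some (Sum.inl ()) = none ↔ _
    simp

lemma goodpairs {m : ℕ} (L : List (Fin (m+1) × Fin (m+1)))
    (hf : (L.map Prod.fst).Nodup) (hs : (L.map Prod.snd).Nodup)
    (ps : List ((T1m m).V × (T2m m).V))
    (hps : ∀ p ∈ ps, p = (Sum.inl (), Sum.inl ()) ∨
      ∃ i i', (i, i') ∈ L ∧ ∃ (h : i'.1 ≠ m) (w : (Bm m).V),
        p = (Sum.inr ⟨i, w⟩, Sum.inr ⟨i', castW h w⟩)) :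
    GoodPairs (T1m m) (T2m m) ps := by
  have hinj : ∀ q₁ ∈ L, ∀ q₂ ∈ L, q₁ = q₂ ↔ q₁.1 = q₂.1 := by
    intro q₁ h₁ q₂ h₂
    exact ⟨fun h => by rw [h], fun h => List.inj_on_of_nodup_map hf h₁ h₂ h⟩
  have hinj' : ∀ q₁ ∈ L, ∀ q₂ ∈ L, q₁ = q₂ ↔ q₁.2 = q₂.2 := by
    intro q₁ h₁ q₂ h₂
    exact ⟨fun h => by rw [h], fun h => List.inj_on_of_nodup_map hs h₁ h₂ h⟩
  intro p hp q hq
  rcases hps p hp with rfl | ⟨i₁, i₁', hL₁, h₁, w₁, rfl⟩ <;>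
    rcases hps q hq with rfl | ⟨i₂, i₂', hL₂, h₂, w₂, rfl⟩ <;> dsimp only
  · simp [T1_parent_root, T2_parent_root]
    exact ⟨fun _ => rfl, fun _ => rfl⟩
  · simp [T1_parent_root, T2_parent_root]
  · constructor
    · rw [T1_parent_inr, parent_castW]
      cases hw : (Bm m).parent w₁
      · exact ⟨fun _ => rfl, fun _ => rfl⟩
      · exact ⟨fun h => (by cases h), fun h => (by cases h)⟩
    · simp
  · have key_i : i₁ = i₂ ↔ i₁' = i₂' := by
      rw [← hinj (i₁, i₁') hL₁ (i₂, i₂') hL₂, hinj' (i₁, i₁') hL₁ (i₂, i₂') hL₂]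
    constructor
    · rw [T1_parent_inr, parent_castW]
      cases hw : (Bm m).parent w₁ <;> simp only [Option.elim, Option.some.injEq]
      · exact ⟨fun h => (by cases h), fun h => (by cases h)⟩
      · exact (Option.some_inj.trans ((inr_eq_T1 _ _).trans ((and_congr key_i Iff.rfl).trans
          (inr_castW_eq h₁ h₂ _ _).symm))).trans Option.some_inj.symm
    · exact (inr_eq_T1 _ _).trans ((and_congr key_i Iff.rfl).trans (inr_castW_eq h₁ h₂ _ _).symm)

lemma key (m : ℕ) : ∀ (n : ℕ) (L : List (Fin (m+1) × Fin (m+1)))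
    (ps : List ((T1m m).V × (T2m m).V)),
    (L.map Prod.fst).Nodup → (L.map Prod.snd).Nodup →
    (∀ p ∈ L, p.2.1 ≠ m) →
    L.length + n ≤ m →
    (∀ p ∈ ps, p = (Sum.inl (), Sum.inl ()) ∨
      ∃ i i', (i, i') ∈ L ∧ ∃ (h : i'.1 ≠ m) (w : (Bm m).V),
        p = (Sum.inr ⟨i, w⟩, Sum.inr ⟨i', castW h w⟩)) →
    DupWinsSched (T1m m) (T2m m) [n] true ps := by
  intro n
  induction n with
  | zero =>
    intro L ps hf hs hne hlen hps
    rw [DupWinsSched, DupWinsSched]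
    exact goodpairs L hf hs ps hps
  | succ n ih =>
    intro L ps hf hs hne hlen hps
    rw [DupWinsSched, if_pos rfl]
    intro x
    rcases x with ⟨⟩ | ⟨i, w⟩
    · refine ⟨Sum.inl (), ih L _ hf hs hne (by omega) ?_⟩
      intro p hp
      rcases List.mem_cons.mp hp with rfl | hp'
      · left; rfl
      · exact hps p hp'
    · by_cases hi : ∃ q ∈ L, q.1 = i
      · obtain ⟨q, hqL, hq1⟩ := hi
        refine ⟨Sum.inr ⟨q.2, castW (hne q hqL) w⟩, ih L _ hf hs hne (by omega) ?_⟩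
        intro p hp
        rcases List.mem_cons.mp hp with rfl | hp'
        · right
          exact ⟨i, q.2, by rw [← hq1]; exact hqL, hne q hqL, w, rfl⟩
        · exact hps p hp'
      · have hfresh : ∃ i' : Fin (m+1), i'.1 ≠ m ∧ ∀ q ∈ L, q.2 ≠ i' := by
          by_contra hcon
          push_neg at hcon
          have hsub : (Finset.univ.image (Fin.castSucc : Fin m → Fin (m+1))) ⊆
              (L.map Prod.snd).toFinset := by
            intro j hj
            simp only [Finset.mem_image] at hj
            obtain ⟨j₀, _, rfl⟩ := hj
            have hne' : (Fin.castSucc j₀).1 ≠ m := Nat.ne_of_lt j₀.2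
            obtain ⟨q, hqL, hq⟩ := hcon _ hne'
            rw [List.mem_toFinset, List.mem_map]
            exact ⟨q, hqL, hq⟩
          have h1 : m ≤ (L.map Prod.snd).toFinset.card := by
            calc m = (Finset.univ.image (Fin.castSucc : Fin m → Fin (m+1))).card := by
                  rw [Finset.card_image_of_injective _ (Fin.castSucc_injective m),
                    Finset.card_univ, Fintype.card_fin]
              _ ≤ _ := Finset.card_le_card hsub
          have h2 : (L.map Prod.snd).toFinset.card ≤ L.length :=
            le_trans (List.toFinset_card_le _) (by simp)
          omega
        obtain ⟨i', hi'm, hi'fresh⟩ := hfresh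
        have hf' : (((i, i') :: L).map Prod.fst).Nodup := by
          rw [List.map_cons, List.nodup_cons]
          refine ⟨?_, hf⟩
          intro hmem
          obtain ⟨q, hqL, hq⟩ := List.mem_map.mp hmem
          exact hi ⟨q, hqL, hq⟩
        have hs' : (((i, i') :: L).map Prod.snd).Nodup := by
          rw [List.map_cons, List.nodup_cons]
          refine ⟨?_, hs⟩
          intro hmem
          obtain ⟨q, hqL, hq⟩ := List.mem_map.mp hmem
          exact hi'fresh q hqL hq
        have hne' : ∀ p ∈ (i, i') :: L, p.2.1 ≠ m := by
          intro p hp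
          rcases List.mem_cons.mp hp with rfl | hp'
          · exact hi'm
          · exact hne p hp'
        refine ⟨Sum.inr ⟨i', castW hi'm w⟩, ih ((i, i') :: L) _ hf' hs' hne' (by simp; omega) ?_⟩
        intro p hp
        rcases List.mem_cons.mp hp with rfl | hp'
        · right
          exact ⟨i, i', List.mem_cons_self, hi'm, w, rfl⟩
        · rcases hps p hp' with h | ⟨a, a', haL, hh, ww, hpe⟩
          · left; exact h
          · right; exact ⟨a, a', List.mem_cons_of_mem _ haL, hh, ww, hpe⟩

/-- For every positive `k` and `m ≥ k`, Duplicator wins the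
`k`-round Ehrenfeucht game on `T₁^{(1,k,m)}` and `T₂^{(1,k,m)}` in which
Spoiler makes all his moves on `T₁^{(1,k,m)}`. -/
theorem dup_wins_base_spoiler_on_T1 (k m : ℕ) (hk : 0 < k) (hm : k ≤ m) :
    DupWinsSched (Tree1 1 k m) (Tree2 1 k m) [k] true
      [((Tree1 1 k m).root, (Tree2 1 k m).root)] := by
  have h := key m k [] [((T1m m).root, (T2m m).root)] (by simp) (by simp) (by simp)
    (by simpa) ?_
  · exact h
  · intro p hp
    rw [List.mem_singleton] at hp
    subst hp
    left; rfl
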